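/- arXiv:1510.01552 — 2 statements merged into one kernel-verified Lean document; each statement's English description precedes it below -/
import Mathlib

section
/- Let (X_i)_{i≥1} be i.i.d. real random variables with E[X₁] < 0 and continuous (atomless) distribution. Let S₀ = 0, S_n = Σ_{i=1}^n X_i, M = max_{n≥0} S_n, Z = argmax_{n≥0} S_n (a.s. unique and finite), and N = min{n ≥ 1 : S_n ≤ 0}. Then P(Z = 0, M = 0) = P(M = 0), and for every n ≥ 1 and every x ≥ 0, P(Z = n, M > x) = P(N > n, S_n > x) · P(M = 0). Equivalently, at the level of densities, f_{Z,M}(n,x) = Σ_{j>n} f_{N,S_n}(j,x) · P(M = 0) for all n ≥ 1 and x ≥ 0. -/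
open MeasureTheory ProbabilityTheory Filter Set

noncomputable section

namespace GF

/-- A lattice point of `ℤ²`. -/
abbrev Pt := ℤ × ℤ

/-- The unit vector `e₁ = (1,0)`. -/
def e1 : Pt := (1, 0)
/-- The unit vector `e₂ = (0,1)`. -/
def e2 : Pt := (0, 1)
/-- The diagonal vector `d = (1,1)`. -/
def dd : Pt := (1, 1)

/-- Strict coordinatewise inequality on `ℤ²`. -/
def ltc (u v : Pt) : Prop := u.1 < v.1 ∧ u.2 < v.2

/-- An up-right (unit steps `e₁`, `e₂`) lattice path from `x` to `y`. -/
structure URPath (x y : Pt) where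
  len : ℕ
  pts : ℕ → Pt
  first : pts 0 = x
  last : pts len = y
  step : ∀ i < len, pts (i + 1) = pts i + e1 ∨ pts (i + 1) = pts i + e2

/-- The weight of an up-right path: the sum of the weights of its vertices. -/
def URPath.weight (W : Pt → ℝ) {x y : Pt} (γ : URPath x y) : ℝ :=
  ∑ i ∈ Finset.range (γ.len + 1), W (γ.pts i)

/-- The last-passage time between `x` and `y`. -/
def lpt (W : Pt → ℝ) (x y : Pt) : ℝ :=
  sSup {t | ∃ γ : URPath x y, γ.weight W = t}

/-- The family `W` is i.i.d. exponential of rate `r` under `P`. -/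
def IIDExp {Ω : Type*} {ι : Type*} [MeasurableSpace Ω] (P : Measure Ω)
    (W : ι → Ω → ℝ) (r : ℝ) : Prop :=
  iIndepFun W P ∧ ∀ i, Measure.map (W i) P = expMeasure r

/-- A substrate: a bi-infinite down-right path through the origin. -/
def IsSubstrate (φ : ℤ → Pt) : Prop :=
  φ 0 = (0, 0) ∧ ∀ z : ℤ, φ (z + 1) = φ z + e1 ∨ φ (z + 1) = φ z - e2

/-- The substrate `φ` has a macroscopic concave wedge, with asymptotic slopes `-lm` at `-∞`
and `-lp` at `+∞`. -/
def HasConcaveWedge (φ : ℤ → Pt) (lm lp : ℝ) : Prop :=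
  Tendsto (fun z : ℤ => ((φ z).2 : ℝ) / ((φ z).1 : ℝ)) atBot (nhds (-lm)) ∧
    Tendsto (fun z : ℤ => ((φ z).2 : ℝ) / ((φ z).1 : ℝ)) atTop (nhds (-lp))

/-- `z` is (the index of) a microscopic concave corner of the substrate `φ`:
`φ_z - φ_{z-1} = -e₂` and `φ_{z+1} - φ_z = e₁`. -/
def IsCornerIdx (φ : ℤ → Pt) (z : ℤ) : Prop :=
  φ z = φ (z - 1) - e2 ∧ φ (z + 1) = φ z + e1

/-- The growth region of the substrate `φ`. -/
def growth (φ : ℤ → Pt) : Set Pt := {x | ∃ z, ltc (φ z) x}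

/-- The corner `φ z` is a root of the point `x`: among all concave corners `z'` with
`φ z' < x` it maximises the last-passage time `L(φ z' + d, x)`. -/
def IsRoot (W : Pt → ℝ) (φ : ℤ → Pt) (z : ℤ) (x : Pt) : Prop :=
  IsCornerIdx φ z ∧ ltc (φ z) x ∧
    ∀ z', IsCornerIdx φ z' → ltc (φ z') x → lpt W (φ z' + dd) x ≤ lpt W (φ z + dd) x

/-- The corner `φ z` is the asymptotic root in the direction `(1, a)`: for every sequence of
points of the growth region going to infinity with asymptotic slope `a`, it is eventually
its root. -/
def IsAsymRoot (W : Pt → ℝ) (φ : ℤ → Pt) (a : ℝ) (z : ℤ) : Prop :=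
  IsCornerIdx φ z ∧
    ∀ x : ℕ → Pt, (∀ n, x n ∈ growth φ) →
      Tendsto (fun n => (x n).1) atTop atTop →
      Tendsto (fun n => (x n).2) atTop atTop →
      Tendsto (fun n => ((x n).2 : ℝ) / ((x n).1 : ℝ)) atTop (nhds a) →
      ∀ᶠ n in atTop, IsRoot W φ z (x n)

/-- `ρ_a = √a / (1 + √a)`. -/
def rho (a : ℝ) : ℝ := Real.sqrt a / (1 + Real.sqrt a)

/-- The increments `X_z^{a,φ}` of the substrate random walk, built from the two independent
exponential families `E` (rate `ρ_a`, used on down/up steps) and `E'` (rate `1 - ρ_a`, used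
with a minus sign on right/left steps). -/
def inc (φ : ℤ → Pt) (E E' : ℤ → ℝ) (z : ℤ) : ℝ :=
  if 1 ≤ z then (if φ z = φ (z - 1) + e1 then -E' z else E z)
  else (if φ (z - 1) = φ z - e1 then E' z else -E z)

/-- The two-sided walk with increments `X`: `S 0 = 0`, `S z = ∑_{k=1}^z X k` for `z > 0` and
`S z = ∑_{k=z}^{-1} X (k+1)` for `z < 0`. -/
def walk (X : ℤ → ℝ) (z : ℤ) : ℝ :=
  if 0 ≤ z then ∑ k ∈ Finset.range z.toNat, X ((k : ℤ) + 1)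
  else ∑ k ∈ Finset.range (-z).toNat, X (-(k : ℤ))

/-- The law of the difference `E - F` of two independent exponential random variables of
rates `r1` and `r2`. -/
def diffExp (r1 r2 : ℝ) : Measure ℝ :=
  Measure.map (fun p : ℝ × ℝ => p.1 - p.2) ((expMeasure r1).prod (expMeasure r2))

/-- The Bernoulli substrate built from the step indicators `U`: `φ₋₁ = e₂`, `φ₀ = 0`,
`φ₁ = e₁`; for `z ≥ 1` the step `φ_{z+1} - φ_z` is `-e₂` when the corresponding indicator is
`true` (else `e₁`), and for `z ≤ -1` the step `φ_{z-1} - φ_z` is `e₂` when the corresponding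
indicator is `true` (else `-e₁`). -/
def bsub (U : ℤ → Bool) : ℤ → Pt := fun z =>
  if 1 ≤ z then
    (1, 0) + ∑ k ∈ Finset.range (z - 1).toNat, (if U ((k : ℤ) + 2) then -(0, 1) else ((1, 0) : Pt))
  else if z = 0 then 0
  else (0, 1) + ∑ k ∈ Finset.range (-z - 1).toNat, (if U (-(k : ℤ) - 2) then (0, 1) else -((1, 0) : Pt))

/-- The step indicators of a Bernoulli substrate with parameters `p₊` (on the right) and
`p₋` (on the left): independent, `P (U z = true) = p₊` for `z ≥ 2` and `= p₋` for `z ≤ -2`. -/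
def BernoulliSteps {Ω : Type*} [MeasurableSpace Ω] (P : Measure Ω)
    (U : ℤ → Ω → Bool) (pp pm : ℝ) : Prop :=
  iIndepFun U P ∧
    (∀ z : ℤ, 2 ≤ z → P {ω | U z ω = true} = ENNReal.ofReal pp) ∧
    (∀ z : ℤ, z ≤ -2 → P {ω | U z ω = true} = ENNReal.ofReal pm)

/-- The substrate walk of the Bernoulli substrate model, as a function of the sample point. -/
def bWalk {Ω : Type*} (U : ℤ → Ω → Bool) (E E' : ℤ → Ω → ℝ) (ω : Ω) : ℤ → ℝ :=
  walk (inc (bsub fun z => U z ω) (fun z => E z ω) fun z => E' z ω)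

/-- The periodic substrate with parameters `k₊`, `k₋`: for `z > 0` it repeatedly takes `k₊`
steps `e₁` followed by one step `-e₂`, and for `z < 0` it repeatedly takes `k₋` steps up
followed by one step left. Its concave corners are the indices `n (k₊ + 1)`, `n ≥ 0`, and
`-n (k₋ + 1)`, `n ≥ 0`. -/
def psub (kp km : ℕ) : ℤ → Pt := fun z =>
  if 0 ≤ z then (z - z / (kp + 1), -(z / (kp + 1)))
  else (-((-z) / (km + 1)), (-z) - (-z) / (km + 1))

/-- The finite rooted substrate with parameter `m`: down the vertical line `x = -1` (so that
`φ_z = |z+1| e₂ - e₁` for `z ≤ -2`), `φ₋₁ = e₂`, then `φ_z = z e₁` for `0 ≤ z ≤ m`, one step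
down, and then right along the line `y = -1`.  It has exactly three concave corners, at
`(-1,1)`, `(0,0)` and `(m,-1)`. -/
def frs (m : ℕ) : ℤ → Pt := fun z =>
  if z ≤ -2 then (-1, -z - 1)
  else if z = -1 then (0, 1)
  else if z ≤ (m : ℤ) then (z, 0)
  else (z - 1, -1)

/-- The flat substrate, whose set of concave corners is the antidiagonal `{(z,-z) : z ∈ ℤ}`;
the corner `(z, -z)` has index `2 z`. -/
def flat : ℤ → Pt := fun w =>
  if 2 ∣ w then (w / 2, -(w / 2)) else ((w + 1) / 2, (-(w - 1)) / 2)

/-- For the flat substrate: the geodesic tree rooted at the corner `(z, -z)` has height at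
least `n`, i.e. it contains a point of the line `x(1) + x(2) = n + 1`. -/
def HeightGe (W : Pt → ℝ) (z : ℤ) (n : ℕ) : Prop :=
  ∃ x : Pt, x.1 + x.2 = (n : ℤ) + 1 ∧ IsRoot W flat (2 * z) x

/-- The cumulative profile of a weighted substrate: `ν(0) = 0`, `ν(k) = ∑_{i=1}^k ν_i` for
`k > 0` and `ν(k) = -∑_{i=k}^{-1} ν_i` for `k < 0`. -/
def cum (ν : ℤ → ℝ) (k : ℤ) : ℝ :=
  if 0 ≤ k then ∑ i ∈ Finset.range k.toNat, ν ((i : ℤ) + 1)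
  else -∑ i ∈ Finset.range (-k).toNat, ν (k + (i : ℤ))

/-- In the weighted substrate model, `k` is a root of the point `(x, n)`: it maximises
`j ↦ ν(j) + L((j,1),(x,n))` over `j ≤ x`. -/
def IsKRoot (W : Pt → ℝ) (ν : ℤ → ℝ) (k x n : ℤ) : Prop :=
  k ≤ x ∧ ∀ j ≤ x, cum ν j + lpt W (j, 1) (x, n) ≤ cum ν k + lpt W (k, 1) (x, n)

/-- In the weighted substrate model, `k` is the asymptotic root in the direction `(1, a)`. -/
def IsAsymKRoot (W : Pt → ℝ) (ν : ℤ → ℝ) (a : ℝ) (k : ℤ) : Prop :=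
  ∀ x t : ℕ → ℤ, (∀ n, 1 ≤ t n) →
    Tendsto x atTop atTop → Tendsto t atTop atTop →
    Tendsto (fun n => (t n : ℝ) / (x n : ℝ)) atTop (nhds a) →
    ∀ᶠ n in atTop, IsKRoot W ν k (x n) (t n)

end GF

open GF
namespace GFAux

/-- Partial sum of the first `k` coordinates of a vector in `Fin m → ℝ` (coordinates beyond
`m` count as `0`). -/
def pS (m : ℕ) (v : Fin m → ℝ) (k : ℕ) : ℝ :=
  ∑ i ∈ Finset.range k, if h : i < m then v ⟨i, h⟩ else 0

lemma pS_meas (m k : ℕ) : Measurable fun v : Fin m → ℝ => pS m v k := by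
  unfold pS
  refine Finset.measurable_sum _ fun i _ => ?_
  by_cases h : i < m
  · simpa [h] using measurable_pi_apply (⟨i, h⟩ : Fin m)
  · simp [h]

lemma pS_apply {m k : ℕ} (hk : k ≤ m) (g : ℕ → ℕ) (Y : ℕ → ℝ) :
    pS m (fun i : Fin m => Y (g i)) k = ∑ i ∈ Finset.range k, Y (g i) := by
  unfold pS
  refine Finset.sum_congr rfl fun i hi => ?_
  have : i < m := lt_of_lt_of_le (Finset.mem_range.mp hi) hk
  simp [this]

/-- The law of a finite iid subfamily is the product measure. -/
lemma pilaw {Ω : Type*} [MeasurableSpace Ω] (P : Measure Ω) [IsProbabilityMeasure P]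
    (X : ℕ → Ω → ℝ) (hmeas : ∀ i, Measurable (X i))
    (hindep : iIndepFun X P)
    (hident : ∀ i, Measure.map (X i) P = Measure.map (X 0) P)
    (m : ℕ) (g : ℕ → ℕ) (hg : Function.Injective fun i : Fin m => g i) :
    Measure.map (fun ω (i : Fin m) => X (g i) ω) P
      = Measure.pi fun _ => Measure.map (X 0) P := by
  have hV : Measurable fun ω (i : Fin m) => X (g i) ω :=
    measurable_pi_lambda _ fun i => hmeas (g i)
  refine (Measure.pi_eq (μ := fun _ : Fin m => Measure.map (X 0) P) fun s hs => ?_).symm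
  rw [Measure.map_apply hV (MeasurableSet.univ_pi hs)]
  have hpre : (fun ω (i : Fin m) => X (g i) ω) ⁻¹' (Set.pi Set.univ s)
      = ⋂ i ∈ (Finset.univ.image fun i : Fin m => g i),
          X i ⁻¹' (⋃ j ∈ {j : Fin m | g j = i}, s j) := by
    ext ω
    simp only [Set.mem_preimage, Set.mem_pi, Set.mem_univ, forall_true_left, Set.mem_iInter,
      Finset.mem_image, Finset.mem_univ, true_and, Set.mem_iUnion, Set.mem_setOf_eq]
    constructor
    · rintro h i ⟨j, rfl⟩
      exact ⟨j, rfl, h j⟩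
    · intro h j
      obtain ⟨j', hj', hj's⟩ := h (g j) ⟨j, rfl⟩
      rwa [hg hj'] at hj's
  rw [hpre]
  rw [hindep.measure_inter_preimage_eq_mul (Finset.univ.image fun i : Fin m => g i)
    (fun i hi => ?_)]
  · rw [Finset.prod_image (fun a _ b _ h => hg h)]
    refine Finset.prod_congr rfl fun j _ => ?_
    have : (⋃ j' ∈ {j' : Fin m | g j' = g j}, s j') = s j := by
      ext y
      simp only [Set.mem_iUnion, Set.mem_setOf_eq]
      exact ⟨fun ⟨j', hj', hy⟩ => by rwa [hg hj'] at hy, fun hy => ⟨j, rfl, hy⟩⟩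
    rw [this, ← Measure.map_apply (hmeas (g j)) (hs j), hident (g j)]
  · refine MeasurableSet.biUnion ?_ fun j _ => hs j
    exact Set.Countable.mono (Set.subset_univ _) (Set.countable_univ)

variable {Ω : Type*} [MeasurableSpace Ω] {P : Measure Ω} [IsProbabilityMeasure P]
    {X : ℕ → Ω → ℝ}

lemma sum_null (hmeas : ∀ i, Measurable (X i))
    (hindep : iIndepFun X P)
    (hcont : ∀ r : ℝ, P {ω | X 0 ω = r} = 0)
    (j : ℕ) (hj : 1 ≤ j) :
    P {ω | ∑ i ∈ Finset.range j, X i ω = 0} = 0 := by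
  set T : Ω → ℝ := fun ω => ∑ i ∈ Finset.Ico 1 j, X i ω with hT
  have hTmeas : Measurable T := Finset.measurable_sum _ fun i _ => hmeas i
  have hsplit : ∀ ω, ∑ i ∈ Finset.range j, X i ω = T ω + X 0 ω := by
    intro ω
    rw [Finset.range_eq_Ico, ← Finset.sum_Ico_consecutive _ (Nat.zero_le 1) hj]
    simp [hT, add_comm]
  have hindepT : IndepFun T (X 0) P := by
    have := hindep.indepFun_finsetSum_of_notMem hmeas
      (show (0:ℕ) ∉ Finset.Ico 1 j by simp)
    have heq : (∑ i ∈ Finset.Ico 1 j, X i) = T := by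
      funext ω; simp [hT, Finset.sum_apply]
    rwa [heq] at this
  have hmap : Measure.map (fun ω => (T ω, X 0 ω)) P
      = (Measure.map T P).prod (Measure.map (X 0) P) :=
    (indepFun_iff_map_prod_eq_prod_map_map hTmeas.aemeasurable
      (hmeas 0).aemeasurable).1 hindepT
  have hsmeas : MeasurableSet {p : ℝ × ℝ | p.1 + p.2 = 0} :=
    (measurable_fst.add measurable_snd) (measurableSet_singleton 0)
  have hpre : {ω | ∑ i ∈ Finset.range j, X i ω = 0}
      = (fun ω => (T ω, X 0 ω)) ⁻¹' {p : ℝ × ℝ | p.1 + p.2 = 0} := by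
    ext ω; simp [hsplit ω]
  rw [hpre, ← Measure.map_apply (hTmeas.prodMk (hmeas 0)) hsmeas, hmap,
    Measure.prod_apply hsmeas]
  have hzero : ∀ x : ℝ, (Measure.map (X 0) P) (Prod.mk x ⁻¹' {p : ℝ × ℝ | p.1 + p.2 = 0}) = 0 := by
    intro x
    have : (Prod.mk x ⁻¹' {p : ℝ × ℝ | p.1 + p.2 = 0}) = {y : ℝ | y = -x} := by
      ext y; constructor <;> (intro h; simp only [Set.mem_preimage, Set.mem_setOf_eq] at *) <;>
        linarith
    rw [this, Measure.map_apply (hmeas 0) (show MeasurableSet {y : ℝ | y = -x} from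
      measurableSet_eq)]
    exact hcont (-x)
  simp only [hzero, lintegral_zero]

lemma ae_bddAbove (hmeas : ∀ i, Measurable (X i))
    (hindep : iIndepFun X P)
    (hident : ∀ i, Measure.map (X i) P = Measure.map (X 0) P)
    (hint : Integrable (X 0) P) (hmean : ∫ ω, X 0 ω ∂P < 0) :
    ∀ᵐ ω ∂P, BddAbove (Set.range fun k => ∑ i ∈ Finset.range k, X i ω) := by
  have hident' : ∀ i, IdentDistrib (X i) (X 0) P P := fun i =>
    ⟨(hmeas i).aemeasurable, (hmeas 0).aemeasurable, hident i⟩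
  have hpair : Pairwise (Function.onFun (IndepFun · · P) X) := fun i j hij => hindep.indepFun hij
  filter_upwards [strong_law_ae_real X hint hpair hident'] with ω hω
  have hlim : Tendsto (fun n : ℕ => ∑ i ∈ Finset.range n, X i ω) atTop atBot := by
    have h1 : Tendsto (fun n : ℕ => (n : ℝ) * ((∑ i ∈ Finset.range n, X i ω) / n)) atTop atBot :=
      Tendsto.atTop_mul_neg hmean tendsto_natCast_atTop_atTop hω
    refine h1.congr fun n => ?_
    rcases Nat.eq_zero_or_pos n with rfl | hn
    · simp
    · field_simp
  obtain ⟨N, hN⟩ := Filter.eventually_atTop.1 (tendsto_atBot.1 hlim 0)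
  refine ⟨max 0 ((Finset.range (N+1)).sup' (by simp) fun k => ∑ i ∈ Finset.range k, X i ω), ?_⟩
  rintro y ⟨k, rfl⟩
  by_cases hk : k ≤ N
  · exact le_max_of_le_right
      (Finset.le_sup' (f := fun k => ∑ i ∈ Finset.range k, X i ω) (Finset.mem_range.2 (by omega)))
  · exact le_max_of_le_left (hN k (le_of_not_ge hk))

end GFAux

open GFAux

/-- **Proposition (maximum and its location vs. hitting time).** For a random walk with
i.i.d. increments of negative mean and continuous distribution, with `M = max_{n≥0} S_n`,
`Z = argmax_{n≥0} S_n` and `N = min{n ≥ 1 : S_n ≤ 0}`: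
`P(Z = 0, M = 0) = P(M = 0)` and `P(Z = n, M > x) = P(N > n, S_n > x) ⬝ P(M = 0)` for all
`n ≥ 1`, `x ≥ 0`. -/
theorem argmax_max_hitting_time_identity
    {Ω : Type*} [MeasurableSpace Ω] (P : Measure Ω) [IsProbabilityMeasure P]
    (X : ℕ → Ω → ℝ) (hmeas : ∀ i, Measurable (X i))
    (hindep : iIndepFun X P)
    (hident : ∀ i, Measure.map (X i) P = Measure.map (X 0) P)
    (hint : Integrable (X 0) P) (hmean : ∫ ω, X 0 ω ∂P < 0)
    (hcont : ∀ r : ℝ, P {ω | X 0 ω = r} = 0)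
    (S : ℕ → Ω → ℝ) (hS : ∀ n ω, S n ω = ∑ i ∈ Finset.range n, X i ω) :
    (P ({ω | ∀ k, S k ω ≤ S 0 ω} ∩ {ω | (⨆ k, S k ω) = 0}) = P {ω | (⨆ k, S k ω) = 0}) ∧
      ∀ n : ℕ, 1 ≤ n → ∀ x : ℝ, 0 ≤ x →
        P ({ω | ∀ k, S k ω ≤ S n ω} ∩ {ω | x < ⨆ k, S k ω}) =
          P {ω | (∀ j : ℕ, 1 ≤ j → j ≤ n → 0 < S j ω) ∧ x < S n ω} *
            P {ω | ∀ k, S k ω ≤ 0} := by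
  have hS0 : ∀ ω, S 0 ω = 0 := fun ω => by simp [hS]
  have hSfun : ∀ k, S k = fun ω => ∑ i ∈ Finset.range k, X i ω := fun k => funext (hS k)
  have hSmeas : ∀ k, Measurable (S k) := fun k => by
    rw [hSfun k]; exact Finset.measurable_sum _ fun i _ => hmeas i
  have hbddrange : ∀ ω, BddAbove (Set.range fun k => ∑ i ∈ Finset.range k, X i ω) →
      BddAbove (Set.range fun k => S k ω) := by
    intro ω h
    have he : (fun k : ℕ => S k ω) = fun k => ∑ i ∈ Finset.range k, X i ω :=
      funext fun k => hS k ω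
    rw [he]; exact h
  constructor
  · refine measure_congr ?_
    rw [Filter.eventuallyEq_set]
    filter_upwards [ae_bddAbove hmeas hindep hident hint hmean] with ω hbdd
    simp only [Set.mem_inter_iff, Set.mem_setOf_eq]
    constructor
    · rintro ⟨-, h⟩; exact h
    · intro h
      refine ⟨fun k => ?_, h⟩
      calc S k ω ≤ ⨆ k, S k ω := le_ciSup (hbddrange ω hbdd) k
        _ = 0 := h
        _ = S 0 ω := (hS0 ω).symm
  · intro n hn x hx
    -- transfer of finite-dimensional probabilities
    have htrans : ∀ (m : ℕ) (g g' : ℕ → ℕ),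
        Function.Injective (fun i : Fin m => g i) →
        Function.Injective (fun i : Fin m => g' i) →
        ∀ G : Set (Fin m → ℝ), MeasurableSet G →
        P ((fun ω (i : Fin m) => X (g i) ω) ⁻¹' G)
          = P ((fun ω (i : Fin m) => X (g' i) ω) ⁻¹' G) := by
      intro m g g' hg hg' G hG
      have hV : Measurable fun ω (i : Fin m) => X (g i) ω :=
        measurable_pi_lambda _ fun i => hmeas (g i)
      have hV' : Measurable fun ω (i : Fin m) => X (g' i) ω :=
        measurable_pi_lambda _ fun i => hmeas (g' i)
      calc P ((fun ω (i : Fin m) => X (g i) ω) ⁻¹' G)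
          = Measure.map (fun ω (i : Fin m) => X (g i) ω) P G := (Measure.map_apply hV hG).symm
        _ = Measure.map (fun ω (i : Fin m) => X (g' i) ω) P G := by
            rw [pilaw P X hmeas hindep hident m g hg, pilaw P X hmeas hindep hident m g' hg']
        _ = P ((fun ω (i : Fin m) => X (g' i) ω) ⁻¹' G) := Measure.map_apply hV' hG
    have hSn : ∀ (k : ℕ) (ω : Ω), S (n + k) ω = S n ω + ∑ i ∈ Finset.range k, X (n + i) ω := by
      intro k ω
      rw [hS, hS, ← Finset.sum_range_add_sum_Ico _ (Nat.le_add_right n k),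
        Finset.sum_Ico_eq_sum_range]
      simp
    -- the events
    set D1 : Set Ω := {ω | (∀ k ≤ n, S k ω ≤ S n ω) ∧ x < S n ω} with hD1
    set E1 : Set Ω := {ω | (∀ j ≤ n, 0 ≤ S j ω) ∧ x < S n ω} with hE1
    set RHS1 : Set Ω := {ω | (∀ j : ℕ, 1 ≤ j → j ≤ n → 0 < S j ω) ∧ x < S n ω} with hRHS1
    set EB : Set Ω := {ω | ∀ k, S (n + k) ω ≤ S n ω} with hEB
    set EB' : Set Ω := {ω | ∀ k, S k ω ≤ 0} with hEB'
    -- step 1 : set identity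
    have hset : {ω | ∀ k, S k ω ≤ S n ω} ∩ {ω | x < ⨆ k, S k ω} = D1 ∩ EB := by
      ext ω
      simp only [hD1, hEB, Set.mem_inter_iff, Set.mem_setOf_eq]
      constructor
      · rintro ⟨hall, hx'⟩
        have hb : BddAbove (Set.range fun k => S k ω) := ⟨S n ω, by rintro y ⟨k, rfl⟩; exact hall k⟩
        have hsup : (⨆ k, S k ω) = S n ω := le_antisymm (ciSup_le hall) (le_ciSup hb n)
        exact ⟨⟨fun k _ => hall k, hsup ▸ hx'⟩, fun k => hall (n + k)⟩
      · rintro ⟨⟨h1, hx'⟩, h2⟩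
        have hall : ∀ k, S k ω ≤ S n ω := by
          intro k
          rcases le_or_gt k n with h | h
          · exact h1 k h
          · have hk : k = n + (k - n) := by omega
            rw [hk]; exact h2 (k - n)
        have hb : BddAbove (Set.range fun k => S k ω) := ⟨S n ω, by rintro y ⟨k, rfl⟩; exact hall k⟩
        have hsup : (⨆ k, S k ω) = S n ω := le_antisymm (ciSup_le hall) (le_ciSup hb n)
        exact ⟨hall, hsup ▸ hx'⟩
    -- step 2 : independence
    have hprod : P (D1 ∩ EB) = P D1 * P EB := by
      let m₁ : MeasurableSpace Ω := ⨆ i ∈ Set.Iio n, MeasurableSpace.comap (X i) inferInstance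
      let m₂ : MeasurableSpace Ω := ⨆ i ∈ Set.Ici n, MeasurableSpace.comap (X i) inferInstance
      have hIndep : Indep m₁ m₂ P :=
        indep_iSup_of_disjoint (fun i => (hmeas i).comap_le) hindep
          (Set.Iio_disjoint_Ici le_rfl)
      have hXm1 : ∀ i < n, Measurable[m₁] (X i) := fun i hi =>
        measurable_iff_comap_le.2
          (le_biSup (fun j => MeasurableSpace.comap (X j) (inferInstance : MeasurableSpace ℝ))
            (show i ∈ Set.Iio n from hi))
      have hXm2 : ∀ i, n ≤ i → Measurable[m₂] (X i) := fun i hi =>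
        measurable_iff_comap_le.2
          (le_biSup (fun j => MeasurableSpace.comap (X j) (inferInstance : MeasurableSpace ℝ))
            (show i ∈ Set.Ici n from hi))
      have hSm1 : ∀ k ≤ n, Measurable[m₁] (S k) := by
        intro k hk
        rw [hSfun k]
        exact Finset.measurable_sum _ fun i hi =>
          hXm1 i (lt_of_lt_of_le (Finset.mem_range.1 hi) hk)
      have hD1m : MeasurableSet[m₁] D1 := by
        have h1 : MeasurableSet[m₁] {ω | ∀ k ≤ n, S k ω ≤ S n ω} := by
          rw [show {ω | ∀ k ≤ n, S k ω ≤ S n ω}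
              = ⋂ k, ⋂ (_ : k ≤ n), {ω | S k ω ≤ S n ω} by ext; simp]
          exact MeasurableSet.iInter fun k => MeasurableSet.iInter fun hk =>
            measurableSet_le (hSm1 k hk) (hSm1 n le_rfl)
        have h2 : MeasurableSet[m₁] {ω | x < S n ω} :=
          measurableSet_lt measurable_const (hSm1 n le_rfl)
        rw [hD1, show {ω | (∀ k ≤ n, S k ω ≤ S n ω) ∧ x < S n ω}
            = {ω | ∀ k ≤ n, S k ω ≤ S n ω} ∩ {ω | x < S n ω} from rfl]
        exact h1.inter h2
      have hEBm : MeasurableSet[m₂] EB := by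
        have heq : EB = ⋂ k, {ω | ∑ i ∈ Finset.range k, X (n + i) ω ≤ 0} := by
          ext ω
          simp only [hEB, Set.mem_setOf_eq, Set.mem_iInter]
          constructor
          · intro h k; have := h k; rw [hSn k ω] at this; linarith
          · intro h k; rw [hSn k ω]; have := h k; linarith
        rw [heq]
        refine MeasurableSet.iInter fun k => ?_
        exact measurableSet_le
          (Finset.measurable_sum _ fun i _ => hXm2 (n + i) (Nat.le_add_right n i))
          measurable_const
      exact (hIndep.indepSet_of_measurableSet hD1m hEBm).measure_inter_eq_mul
    -- step 3 : P EB = P EB'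
    have hEBeq : P EB = P EB' := by
      set C : ℕ → Set Ω := fun m => {ω | ∀ k ≤ m, S (n + k) ω ≤ S n ω} with hC
      set C' : ℕ → Set Ω := fun m => {ω | ∀ k ≤ m, S k ω ≤ 0} with hC'
      have hBi : EB = ⋂ m, C m := by
        ext ω; simp only [hEB, hC, Set.mem_setOf_eq, Set.mem_iInter]
        exact ⟨fun h m k hk => h k, fun h k => h k k le_rfl⟩
      have hBi' : EB' = ⋂ m, C' m := by
        ext ω; simp only [hEB', hC', Set.mem_setOf_eq, Set.mem_iInter]
        exact ⟨fun h m k hk => h k, fun h k => h k k le_rfl⟩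
      have hCmeas : ∀ m, MeasurableSet (C m) := by
        intro m
        rw [show C m = ⋂ k, ⋂ (_ : k ≤ m), {ω | S (n + k) ω ≤ S n ω} by ext; simp [hC]]
        exact MeasurableSet.iInter fun k => MeasurableSet.iInter fun hk =>
          measurableSet_le (hSmeas _) (hSmeas n)
      have hC'meas : ∀ m, MeasurableSet (C' m) := by
        intro m
        rw [show C' m = ⋂ k, ⋂ (_ : k ≤ m), {ω | S k ω ≤ 0} by ext; simp [hC']]
        exact MeasurableSet.iInter fun k => MeasurableSet.iInter fun hk =>
          measurableSet_le (hSmeas _) measurable_const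
      have hCC' : ∀ m, P (C m) = P (C' m) := by
        intro m
        set G2 : Set (Fin m → ℝ) := {v | ∀ k ≤ m, pS m v k ≤ 0} with hG2
        have hG2meas : MeasurableSet G2 := by
          rw [show G2 = ⋂ k, ⋂ (_ : k ≤ m), {v : Fin m → ℝ | pS m v k ≤ 0} by ext; simp [hG2]]
          exact MeasurableSet.iInter fun k => MeasurableSet.iInter fun hk =>
            measurableSet_le (pS_meas m k) measurable_const
        have hpre1 : C m = (fun ω (i : Fin m) => X (n + (i : ℕ)) ω) ⁻¹' G2 := by
          ext ω
          simp only [hC, hG2, Set.mem_setOf_eq, Set.mem_preimage]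
          refine forall_congr' fun k => ?_
          refine imp_congr_right fun hk => ?_
          rw [pS_apply hk (fun t => n + t) (fun j => X j ω), hSn k ω]
          constructor <;> intro h <;> linarith
        have hpre2 : C' m = (fun ω (i : Fin m) => X ((i : ℕ)) ω) ⁻¹' G2 := by
          ext ω
          simp only [hC', hG2, Set.mem_setOf_eq, Set.mem_preimage]
          refine forall_congr' fun k => ?_
          refine imp_congr_right fun hk => ?_
          rw [pS_apply hk (fun t => t) (fun j => X j ω), ← hS]
        rw [hpre1, hpre2]
        exact htrans m (fun t => n + t) (fun t => t)
          (fun a b hab => Fin.val_injective (Nat.add_left_cancel hab))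
          (fun a b hab => Fin.val_injective hab) G2 hG2meas
      have hanti : Antitone C := fun a b hab ω hω k hk => hω k (hk.trans hab)
      have hanti' : Antitone C' := fun a b hab ω hω k hk => hω k (hk.trans hab)
      have h1 : Tendsto (fun m => P (C m)) atTop (nhds (P (⋂ m, C m))) :=
        tendsto_measure_iInter_atTop (fun m => (hCmeas m).nullMeasurableSet) hanti
          ⟨0, measure_ne_top P _⟩
      have h2 : Tendsto (fun m => P (C' m)) atTop (nhds (P (⋂ m, C' m))) :=
        tendsto_measure_iInter_atTop (fun m => (hC'meas m).nullMeasurableSet) hanti'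
          ⟨0, measure_ne_top P _⟩
      rw [hBi, hBi']
      exact tendsto_nhds_unique (h1.congr fun m => hCC' m) h2
    -- step 4 : P D1 = P RHS1
    have hD1eq : P D1 = P RHS1 := by
      have hkey : ∀ (ω : Ω) (k : ℕ), k ≤ n →
          ∑ i ∈ Finset.range k, X (n - 1 - i) ω + S (n - k) ω = S n ω := by
        intro ω k hk
        have h1 : S n ω = ∑ i ∈ Finset.range n, X (n - 1 - i) ω := by
          rw [hS]; exact (Finset.sum_range_reflect (fun i => X i ω) n).symm
        have h2 : ∑ i ∈ Finset.range n, X (n - 1 - i) ω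
            = ∑ i ∈ Finset.range k, X (n - 1 - i) ω
              + ∑ i ∈ Finset.Ico k n, X (n - 1 - i) ω := by
          rw [Finset.sum_range_add_sum_Ico _ hk]
        have h3 : ∑ i ∈ Finset.Ico k n, X (n - 1 - i) ω = S (n - k) ω := by
          rw [Finset.sum_Ico_eq_sum_range, hS,
            ← Finset.sum_range_reflect (fun i => X i ω) (n - k)]
          refine Finset.sum_congr rfl fun t ht => ?_
          have ht' : t < n - k := Finset.mem_range.1 ht
          congr 1
          omega
        rw [h1, h2, h3]
      set G1 : Set (Fin n → ℝ) :=
        {v | (∀ k ≤ n, pS n v k ≤ pS n v n) ∧ x < pS n v n} with hG1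
      have hG1meas : MeasurableSet G1 := by
        have ha : MeasurableSet {v : Fin n → ℝ | ∀ k ≤ n, pS n v k ≤ pS n v n} := by
          rw [show {v : Fin n → ℝ | ∀ k ≤ n, pS n v k ≤ pS n v n}
              = ⋂ k, ⋂ (_ : k ≤ n), {v : Fin n → ℝ | pS n v k ≤ pS n v n} by ext; simp]
          exact MeasurableSet.iInter fun k => MeasurableSet.iInter fun hk =>
            measurableSet_le (pS_meas n k) (pS_meas n n)
        have hb : MeasurableSet {v : Fin n → ℝ | x < pS n v n} :=
          measurableSet_lt measurable_const (pS_meas n n)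
        exact ha.inter hb
      have hpre1 : D1 = (fun ω (i : Fin n) => X ((i : ℕ)) ω) ⁻¹' G1 := by
        ext ω
        simp only [hD1, hG1, Set.mem_setOf_eq, Set.mem_preimage]
        have hps : ∀ k ≤ n, pS n (fun i : Fin n => X ((i : ℕ)) ω) k = S k ω := by
          intro k hk
          rw [pS_apply hk (fun t => t) (fun j => X j ω), ← hS]
        rw [hps n le_rfl]
        constructor
        · rintro ⟨h1, h2⟩
          exact ⟨fun k hk => by rw [hps k hk]; exact h1 k hk, h2⟩
        · rintro ⟨h1, h2⟩
          exact ⟨fun k hk => by have := h1 k hk; rwa [hps k hk] at this, h2⟩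
      have hpre2 : E1 = (fun ω (i : Fin n) => X (n - 1 - (i : ℕ)) ω) ⁻¹' G1 := by
        ext ω
        simp only [hE1, hG1, Set.mem_setOf_eq, Set.mem_preimage]
        have hps : ∀ k ≤ n, pS n (fun i : Fin n => X (n - 1 - (i : ℕ)) ω) k
            = ∑ i ∈ Finset.range k, X (n - 1 - i) ω := fun k hk =>
          pS_apply hk (fun t => n - 1 - t) (fun j => X j ω)
        have hpn : pS n (fun i : Fin n => X (n - 1 - (i : ℕ)) ω) n = S n ω := by
          rw [hps n le_rfl]
          have := hkey ω n le_rfl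
          simp only [Nat.sub_self] at this
          rw [hS0] at this
          linarith
        rw [hpn]
        constructor
        · rintro ⟨h1, h2⟩
          refine ⟨fun k hk => ?_, h2⟩
          rw [hps k hk]
          have := hkey ω k hk
          have h0 : 0 ≤ S (n - k) ω := h1 (n - k) (Nat.sub_le n k)
          linarith
        · rintro ⟨h1, h2⟩
          refine ⟨fun j hj => ?_, h2⟩
          have hk : n - j ≤ n := Nat.sub_le n j
          have := h1 (n - j) hk
          rw [hps (n - j) hk] at this
          have hkey' := hkey ω (n - j) hk
          have hnn : n - (n - j) = j := by omega
          rw [hnn] at hkey'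
          linarith
      have hDE : P D1 = P E1 := by
        rw [hpre1, hpre2]
        exact htrans n (fun t => t) (fun t => n - 1 - t)
          (fun a b hab => Fin.val_injective hab)
          (fun a b hab => Fin.val_injective (by
            have ha := a.isLt; have hb := b.isLt
            have h : n - 1 - (a : ℕ) = n - 1 - (b : ℕ) := hab
            omega)) G1 hG1meas
      have hnull : ∀ j, 1 ≤ j → P {ω | S j ω = 0} = 0 := by
        intro j hj
        have h := sum_null hmeas hindep hcont j hj
        have : {ω | S j ω = 0} = {ω | ∑ i ∈ Finset.range j, X i ω = 0} := by
          ext ω; rw [Set.mem_setOf_eq, Set.mem_setOf_eq, hS]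
        rwa [this]
      have hae2 : ∀ᵐ ω ∂P, ∀ j, 1 ≤ j → j ≤ n → S j ω ≠ 0 := by
        rw [ae_all_iff]
        intro j
        by_cases hj : 1 ≤ j
        · have h : ∀ᵐ ω ∂P, S j ω ≠ 0 := by
            rw [ae_iff]
            have : {ω | ¬ S j ω ≠ 0} = {ω | S j ω = 0} := by ext ω; simp
            rw [this]; exact hnull j hj
          filter_upwards [h] with ω h' _ _; exact h'
        · exact Filter.Eventually.of_forall fun ω h => absurd h hj
      have hER : P E1 = P RHS1 := by
        refine measure_congr ?_
        rw [Filter.eventuallyEq_set]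
        filter_upwards [hae2] with ω hω
        simp only [hE1, hRHS1, Set.mem_setOf_eq]
        constructor
        · rintro ⟨h1, h2⟩
          exact ⟨fun j hj1 hjn => lt_of_le_of_ne (h1 j hjn) (Ne.symm (hω j hj1 hjn)), h2⟩
        · rintro ⟨h1, h2⟩
          refine ⟨fun j hjn => ?_, h2⟩
          rcases Nat.eq_zero_or_pos j with rfl | hj
          · rw [hS0]
          · exact le_of_lt (h1 j hj hjn)
      rw [hDE, hER]
    rw [hset, hprod, hEBeq, hD1eq]
end
end

section
/- Consider exponential last-passage percolation with the flat substrate whose concave corners are the anti-diagonal {(z,−z) : z ∈ ℤ}, and let H₀ be the height of the geodesic tree rooted at the origin. Then there exists c > 0 such that P(H₀ ≥ n) ≥ c/n for all n ≥ 1, and consequently E[H₀] = ∞. -/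
open MeasureTheory ProbabilityTheory Filter Set

noncomputable section

open GF
namespace GFAux

open GF
open scoped ENNReal

/-! ### Deterministic path lemmas -/

lemma pts_sum {x y : Pt} (γ : URPath x y) :
    ∀ i, i ≤ γ.len → (γ.pts i).1 + (γ.pts i).2 = x.1 + x.2 + (i : ℤ) := by
  intro i
  induction i with
  | zero => intro _; simp [γ.first]
  | succ i ih =>
    intro h
    have hi := ih (by omega)
    rcases γ.step i (by omega) with h' | h' <;>
      simp only [h', Prod.fst_add, Prod.snd_add, e1, e2] <;> push_cast <;> omega

lemma len_eq {x y : Pt} (γ : URPath x y) :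
    (γ.len : ℤ) = y.1 + y.2 - (x.1 + x.2) := by
  have := pts_sum γ γ.len le_rfl
  rw [γ.last] at this
  omega

lemma pts_mono {x y : Pt} (γ : URPath x y) :
    ∀ {i j : ℕ}, i ≤ j → j ≤ γ.len → γ.pts i ≤ γ.pts j := by
  intro i j hij hj
  induction j with
  | zero =>
    obtain rfl := Nat.le_zero.mp hij
    exact le_rfl
  | succ j ih =>
    rcases Nat.lt_succ_iff_lt_or_eq.mp (Nat.lt_succ_of_le hij) with hlt | rfl
    · refine le_trans (ih (by omega) (by omega)) ?_
      rcases γ.step j (by omega) with h | h <;> rw [h] <;>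
        simp [e1, e2, Prod.le_def]
    · exact le_rfl

lemma pts_lower {x y : Pt} (γ : URPath x y) {i : ℕ} (hi : i ≤ γ.len) : x ≤ γ.pts i := by
  have := pts_mono γ (Nat.zero_le i) hi
  rwa [γ.first] at this

lemma pts_upper {x y : Pt} (γ : URPath x y) {i : ℕ} (hi : i ≤ γ.len) : γ.pts i ≤ y := by
  have := pts_mono γ hi le_rfl
  rwa [γ.last] at this

lemma weight_congr {x y : Pt} (γ : URPath x y) {W W' : Pt → ℝ}
    (h : ∀ p : Pt, x ≤ p → p ≤ y → W p = W' p) : γ.weight W = γ.weight W' := by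
  unfold URPath.weight
  refine Finset.sum_congr rfl fun i hi => ?_
  have hi' : i ≤ γ.len := by have := Finset.mem_range.mp hi; omega
  exact h _ (pts_lower γ hi') (pts_upper γ hi')

lemma lpt_congr (W W' : Pt → ℝ) (x y : Pt)
    (h : ∀ p : Pt, x ≤ p → p ≤ y → W p = W' p) : lpt W x y = lpt W' x y := by
  unfold lpt
  congr 1
  ext t
  constructor
  · rintro ⟨γ, rfl⟩; exact ⟨γ, (weight_congr γ h).symm⟩
  · rintro ⟨γ, rfl⟩; exact ⟨γ, weight_congr γ h⟩

lemma lpt_shift (W : Pt → ℝ) (a b v : Pt) :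
    lpt (fun p => W (p + v)) a b = lpt W (a + v) (b + v) := by
  unfold lpt
  congr 1
  ext t
  constructor
  · rintro ⟨γ, rfl⟩
    refine ⟨⟨γ.len, fun i => γ.pts i + v, by simp [γ.first], by simp [γ.last], ?_⟩, ?_⟩
    · intro i hi
      rcases γ.step i hi with h | h
      · left; show γ.pts (i + 1) + v = γ.pts i + v + e1; rw [h]; ring
      · right; show γ.pts (i + 1) + v = γ.pts i + v + e2; rw [h]; ring
    · rfl
  · rintro ⟨γ, rfl⟩
    refine ⟨⟨γ.len, fun i => γ.pts i - v, by simp [γ.first], by simp [γ.last], ?_⟩, ?_⟩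
    · intro i hi
      rcases γ.step i hi with h | h
      · left; show γ.pts (i + 1) - v = γ.pts i - v + e1; rw [h]; ring
      · right; show γ.pts (i + 1) - v = γ.pts i - v + e2; rw [h]; ring
    · show (∑ i ∈ Finset.range (γ.len + 1), W (γ.pts i - v + v)) = γ.weight W
      unfold URPath.weight
      exact Finset.sum_congr rfl fun i _ => by rw [sub_add_cancel]

lemma lpt_shift' (W : Pt → ℝ) (v a x : Pt) :
    lpt (fun p => W (p + v)) a (x - v) = lpt W (a + v) x := by
  rw [lpt_shift]
  congr 1
  ring

/-! ### Encoding paths by boolean step sequences -/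

def mkpts (a : Pt) (c : ℕ → Bool) : ℕ → Pt
  | 0 => a
  | i + 1 => mkpts a c i + (if c i then e1 else e2)

@[simp] lemma mkpts_zero (a : Pt) (c : ℕ → Bool) : mkpts a c 0 = a := rfl

lemma mkpts_succ (a : Pt) (c : ℕ → Bool) (i : ℕ) :
    mkpts a c (i + 1) = mkpts a c i + (if c i then e1 else e2) := rfl

def extb {N : ℕ} (c : Fin N → Bool) : ℕ → Bool := fun i => if h : i < N then c ⟨i, h⟩ else true

lemma mkpts_congr (a : Pt) {c c' : ℕ → Bool} :
    ∀ i : ℕ, (∀ j, j < i → c j = c' j) → mkpts a c i = mkpts a c' i := by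
  intro i
  induction i with
  | zero => intro _; rfl
  | succ i ih =>
    intro h
    rw [mkpts_succ, mkpts_succ, ih (fun j hj => h j (by omega)), h i (by omega)]

lemma pweights_eq (W : Pt → ℝ) (a b : Pt) (N : ℕ) (hN : a.1 + a.2 + (N : ℤ) = b.1 + b.2) :
    {t | ∃ γ : URPath a b, γ.weight W = t} =
      (fun c : Fin N → Bool => ∑ i ∈ Finset.range (N + 1), W (mkpts a (extb c) i)) ''
        {c | mkpts a (extb c) N = b} := by
  ext t
  constructor
  · rintro ⟨γ, rfl⟩
    have hlenZ := len_eq γ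
    have hlen : γ.len = N := by omega
    set c : ℕ → Bool := fun i => decide (γ.pts (i + 1) = γ.pts i + e1) with hc
    have hpts : ∀ i, i ≤ γ.len → mkpts a c i = γ.pts i := by
      intro i
      induction i with
      | zero => intro _; exact γ.first.symm
      | succ i ih =>
        intro h
        rw [mkpts_succ, ih (by omega)]
        rcases γ.step i (by omega) with h' | h'
        · have hci : c i = true := by rw [hc]; exact decide_eq_true h'
          rw [hci, if_pos rfl]
          exact h'.symm
        · have hne : γ.pts (i + 1) ≠ γ.pts i + e1 := by
            rw [h']
            intro hcontra
            have := add_left_cancel hcontra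
            simp [e1, e2, Prod.ext_iff] at this
          have hci : c i = false := by rw [hc]; exact decide_eq_false hne
          rw [hci]
          simp only [Bool.false_eq_true, if_false]
          exact h'.symm
    refine ⟨fun i : Fin N => c i, ?_, ?_⟩
    · show mkpts a (extb fun i : Fin N => c i) N = b
      have hcc : mkpts a (extb fun i : Fin N => c i) N = mkpts a c N :=
        mkpts_congr a N (fun j hj => by simp [extb, hj])
      rw [hcc, ← hlen, hpts γ.len le_rfl, γ.last]
    · show (∑ i ∈ Finset.range (N + 1), W (mkpts a (extb fun i : Fin N => c i) i)) = γ.weight W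
      unfold URPath.weight
      rw [hlen]
      refine Finset.sum_congr rfl fun i hi => ?_
      have hi' : i ≤ N := by have := Finset.mem_range.mp hi; omega
      have hcc : mkpts a (extb fun i : Fin N => c i) i = mkpts a c i :=
        mkpts_congr a i (fun j hj => by simp [extb, show j < N by omega])
      rw [hcc, hpts i (by omega)]
  · rintro ⟨c, hc, rfl⟩
    refine ⟨⟨N, mkpts a (extb c), rfl, hc, fun i _ => ?_⟩, rfl⟩
    by_cases h : extb c i = true
    · exact Or.inl (by rw [mkpts_succ, if_pos h])
    · exact Or.inr (by rw [mkpts_succ, if_neg h])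

lemma exists_valid (a b : Pt) (hab : a ≤ b) (N : ℕ)
    (hN : a.1 + a.2 + (N : ℤ) = b.1 + b.2) :
    ∃ c : Fin N → Bool, mkpts a (extb c) N = b := by
  have hab1 : a.1 ≤ b.1 := hab.1
  have hab2 : a.2 ≤ b.2 := hab.2
  set k := (b.1 - a.1).toNat with hk
  refine ⟨fun i => decide ((i : ℕ) < k), ?_⟩
  have key : ∀ i, i ≤ N →
      mkpts a (extb fun i : Fin N => decide ((i : ℕ) < k)) i
        = (a.1 + (min i k : ℕ), a.2 + ((i - min i k : ℕ) : ℤ)) := by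
    intro i
    induction i with
    | zero => intro _; simp
    | succ i ih =>
      intro h
      rw [mkpts_succ, ih (by omega)]
      have hik : i < N := by omega
      by_cases hlt : i < k
      · have hc : extb (fun i : Fin N => decide ((i : ℕ) < k)) i = true := by
          simp [extb, hik, hlt]
        rw [hc, if_pos rfl]
        have h1 : min i k = i := min_eq_left (by omega)
        have h2 : min (i + 1) k = i + 1 := min_eq_left (by omega)
        rw [h1, h2]
        simp only [e1, Prod.mk_add_mk, Prod.mk.injEq]
        constructor <;> push_cast <;> omega
      · have hc : extb (fun i : Fin N => decide ((i : ℕ) < k)) i = false := by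
          simp [extb, hik, hlt]
        rw [hc]
        simp only [Bool.false_eq_true, if_false]
        have h1 : min i k = k := min_eq_right (by omega)
        have h2 : min (i + 1) k = k := min_eq_right (by omega)
        rw [h1, h2]
        simp only [e2, Prod.mk_add_mk, Prod.mk.injEq]
        constructor <;> push_cast <;> omega
  rw [key N le_rfl]
  have hkN : k ≤ N := by omega
  have h1 : min N k = k := min_eq_right hkN
  rw [h1]
  simp only [Prod.mk.injEq, Prod.ext_iff]
  constructor <;> push_cast <;> omega

lemma lpt_eq_sup' (W : Pt → ℝ) (a b : Pt) (N : ℕ)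
    (hN : a.1 + a.2 + (N : ℤ) = b.1 + b.2)
    (hne : (Finset.univ.filter fun c : Fin N → Bool => mkpts a (extb c) N = b).Nonempty) :
    lpt W a b = (Finset.univ.filter fun c : Fin N → Bool => mkpts a (extb c) N = b).sup' hne
      (fun c => ∑ i ∈ Finset.range (N + 1), W (mkpts a (extb c) i)) := by
  rw [Finset.sup'_eq_csSup_image]
  unfold lpt
  rw [pweights_eq W a b N hN]
  congr 1
  ext c
  simp

/-! ### The flat substrate -/

lemma flat_even (u : ℤ) : flat (2 * u) = (u, -u) := by
  unfold flat
  rw [if_pos ⟨u, rfl⟩, Int.mul_ediv_cancel_left u (by norm_num)]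

lemma flat_odd (u : ℤ) : flat (2 * u + 1) = (u + 1, -u) := by
  unfold flat
  rw [if_neg (by omega)]
  simp only [Prod.mk.injEq]
  constructor <;> omega

lemma flat_zero : flat 0 = ((0 : ℤ), (0 : ℤ)) := by
  simpa using flat_even 0

lemma isCornerIdx_flat_iff (w : ℤ) : IsCornerIdx flat w ↔ 2 ∣ w := by
  constructor
  · intro h
    by_contra hodd
    obtain ⟨u, rfl⟩ : ∃ u, w = 2 * u + 1 := ⟨w / 2, by omega⟩
    have h1 := h.1
    rw [flat_odd, show 2 * u + 1 - 1 = 2 * u by ring, flat_even, GF.e2,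
      Prod.mk_sub_mk, Prod.mk.injEq] at h1
    omega
  · rintro ⟨u, rfl⟩
    constructor
    · rw [show 2 * u - 1 = 2 * (u - 1) + 1 by ring, flat_odd, flat_even]
      simp only [GF.e2, Prod.mk_sub_mk, Prod.mk.injEq]
      constructor <;> ring
    · rw [show 2 * u + 1 = 2 * u + 1 from rfl, flat_odd, flat_even]
      simp only [GF.e1, Prod.mk_add_mk, Prod.mk.injEq]
      exact ⟨trivial, by ring⟩

lemma isRoot_shift (W : Pt → ℝ) (z : ℤ) (x : Pt) :
    IsRoot W flat (2 * z) x ↔ IsRoot (fun p => W (p + (z, -z))) flat 0 (x - (z, -z)) := by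
  have ea : ∀ u : ℤ, ((u, -u) + dd) + ((z, -z) : Pt) = flat (2 * (u + z)) + dd := by
    intro u
    rw [flat_even]
    simp only [dd, Prod.mk_add_mk, Prod.mk.injEq]
    constructor <;> ring
  have eb : ((((0 : ℤ), (0 : ℤ)) : Pt) + dd) + ((z, -z) : Pt) = flat (2 * z) + dd := by
    rw [flat_even]
    simp only [dd, Prod.mk_add_mk, Prod.mk.injEq]
    constructor <;> ring
  unfold IsRoot
  constructor
  · rintro ⟨_, h2, h3⟩
    refine ⟨(isCornerIdx_flat_iff 0).mpr ⟨0, by ring⟩, ?_, ?_⟩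
    · rw [flat_zero]
      rw [flat_even] at h2
      simp only [ltc, Prod.fst_sub, Prod.snd_sub] at h2 ⊢
      obtain ⟨ha, hb⟩ := h2
      constructor <;> simp <;> omega
    · intro z' hcz' hlz'
      obtain ⟨u, rfl⟩ := (isCornerIdx_flat_iff z').mp hcz'
      rw [flat_even] at hlz'
      rw [flat_even, flat_zero, lpt_shift' W (z, -z) _ x, lpt_shift' W (z, -z) _ x, ea u, eb]
      refine h3 (2 * (u + z)) ((isCornerIdx_flat_iff _).mpr ⟨u + z, rfl⟩) ?_
      rw [flat_even]
      simp only [ltc, Prod.fst_sub, Prod.snd_sub] at hlz' ⊢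
      obtain ⟨ha, hb⟩ := hlz'
      constructor <;> omega
  · rintro ⟨_, h2, h3⟩
    refine ⟨(isCornerIdx_flat_iff _).mpr ⟨z, rfl⟩, ?_, ?_⟩
    · rw [flat_even]
      rw [flat_zero] at h2
      simp only [ltc, Prod.fst_sub, Prod.snd_sub] at h2 ⊢
      obtain ⟨ha, hb⟩ := h2
      simp at ha hb
      constructor <;> omega
    · intro z' hcz' hlz'
      obtain ⟨u, rfl⟩ := (isCornerIdx_flat_iff z').mp hcz'
      have h := h3 (2 * (u - z)) ((isCornerIdx_flat_iff _).mpr ⟨u - z, rfl⟩) ?_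
      · rw [flat_even, flat_zero, lpt_shift' W (z, -z) _ x, lpt_shift' W (z, -z) _ x,
          ea (u - z), eb, show u - z + z = u by ring] at h
        rwa [flat_even] at h ⊢
      · rw [flat_even] at hlz' ⊢
        simp only [ltc, Prod.fst_sub, Prod.snd_sub] at hlz' ⊢
        obtain ⟨ha, hb⟩ := hlz'
        constructor <;> omega

lemma isRoot_zero_congr {W W' : Pt → ℝ} (y : Pt)
    (h : ∀ p : Pt, 2 - y.2 ≤ p.1 → p.1 ≤ y.1 → 2 - y.1 ≤ p.2 → p.2 ≤ y.2 → W p = W' p) :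
    IsRoot W flat 0 y ↔ IsRoot W' flat 0 y := by
  unfold IsRoot
  refine and_congr_right fun _ => and_congr_right fun hl => ?_
  rw [flat_zero] at hl
  have hy1 : 1 ≤ y.1 := hl.1
  have hy2 : 1 ≤ y.2 := hl.2
  have hcongr : ∀ u : ℤ, -y.2 < u → u < y.1 →
      lpt W ((u, -u) + dd) y = lpt W' ((u, -u) + dd) y := by
    intro u hu1 hu2
    refine lpt_congr W W' _ y fun p hp1 hp2 => ?_
    have hpa := (Prod.le_def.mp hp1).1
    have hpb := (Prod.le_def.mp hp1).2
    have hpc := (Prod.le_def.mp hp2).1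
    have hpd := (Prod.le_def.mp hp2).2
    simp only [dd, Prod.mk_add_mk, Prod.fst_add, Prod.snd_add] at hpa hpb
    exact h p (by omega) hpc (by omega) hpd
  refine forall_congr' fun z' => ?_
  refine imp_congr_right fun hcz' => imp_congr_right fun hlz' => ?_
  obtain ⟨u, rfl⟩ := (isCornerIdx_flat_iff z').mp hcz'
  rw [flat_even] at hlz'
  have hu1 : u < y.1 := hlz'.1
  have hu2 : -y.2 < u := by have := hlz'.2; omega
  rw [flat_even, flat_zero, hcongr u hu2 hu1,
    show (((0 : ℤ), (0 : ℤ)) : Pt) = ((0 : ℤ), -(0 : ℤ)) by norm_num,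
    hcongr 0 (by omega) (by omega)]

lemma exists_root (W : Pt → ℝ) (n : ℕ) (hn : 1 ≤ n) :
    ∃ z ∈ Finset.Icc (0 : ℤ) ((n : ℤ) - 1), IsRoot W flat (2 * z) ((n : ℤ), 1) := by
  obtain ⟨z, hz, hmax⟩ := Finset.exists_max_image (Finset.Icc (0 : ℤ) ((n : ℤ) - 1))
    (fun z => lpt W ((z, -z) + dd) ((n : ℤ), 1)) ⟨0, Finset.mem_Icc.mpr ⟨le_rfl, by omega⟩⟩
  have hzb := Finset.mem_Icc.mp hz
  refine ⟨z, hz, (isCornerIdx_flat_iff _).mpr ⟨z, rfl⟩, ?_, ?_⟩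
  · rw [flat_even]
    exact ⟨by omega, by omega⟩
  · intro z' hcz' hlz'
    obtain ⟨u, rfl⟩ := (isCornerIdx_flat_iff z').mp hcz'
    rw [flat_even] at hlz' ⊢
    rw [flat_even]
    refine hmax u (Finset.mem_Icc.mpr ?_)
    obtain ⟨ha, hb⟩ := hlz'
    simp only at ha hb
    omega

/-! ### Extension of finitely-supported configurations -/

def extS (S : Finset Pt) (g : ↥S → ℝ) : Pt → ℝ := fun p => if h : p ∈ S then g ⟨p, h⟩ else 0

lemma measurable_lpt_extS (S : Finset Pt) {a b : Pt} (hab : a ≤ b) :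
    Measurable fun g : ↥S → ℝ => lpt (extS S g) a b := by
  classical
  set N := (b.1 + b.2 - (a.1 + a.2)).toNat with hNdef
  have hab1 : a.1 ≤ b.1 := hab.1
  have hab2 : a.2 ≤ b.2 := hab.2
  have hN : a.1 + a.2 + (N : ℤ) = b.1 + b.2 := by omega
  obtain ⟨c₀, hc₀⟩ := exists_valid a b hab N hN
  have hne : (Finset.univ.filter fun c : Fin N → Bool => mkpts a (extb c) N = b).Nonempty :=
    ⟨c₀, Finset.mem_filter.mpr ⟨Finset.mem_univ _, hc₀⟩⟩
  have hrep : (fun g : ↥S → ℝ => lpt (extS S g) a b) = fun g =>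
      (Finset.univ.filter fun c : Fin N → Bool => mkpts a (extb c) N = b).sup' hne
        (fun c => ∑ i ∈ Finset.range (N + 1), extS S g (mkpts a (extb c) i)) :=
    funext fun g => lpt_eq_sup' (extS S g) a b N hN hne
  rw [hrep]
  have hswap : (fun g : ↥S → ℝ =>
      (Finset.univ.filter fun c : Fin N → Bool => mkpts a (extb c) N = b).sup' hne
        (fun c => ∑ i ∈ Finset.range (N + 1), extS S g (mkpts a (extb c) i))) =
      (Finset.univ.filter fun c : Fin N → Bool => mkpts a (extb c) N = b).sup' hne
        (fun c (g : ↥S → ℝ) => ∑ i ∈ Finset.range (N + 1), extS S g (mkpts a (extb c) i)) :=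
    funext fun g => (Finset.sup'_apply hne
      (fun c (g : ↥S → ℝ) => ∑ i ∈ Finset.range (N + 1), extS S g (mkpts a (extb c) i)) g).symm
  rw [hswap]
  refine Finset.measurable_sup' hne fun c _ => ?_
  refine Finset.measurable_sum _ fun i _ => ?_
  unfold extS
  by_cases h : mkpts a (extb c) i ∈ S
  · simp only [dif_pos h]
    exact measurable_pi_apply _
  · simp only [dif_neg h]
    exact measurable_const

lemma measurableSet_isRootSet (S : Finset Pt) (y : Pt) (hy1 : 1 ≤ y.1) (hy2 : 1 ≤ y.2) :
    MeasurableSet {g : ↥S → ℝ | IsRoot (extS S g) flat 0 y} := by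
  classical
  have hcorner0 : IsCornerIdx flat 0 := (isCornerIdx_flat_iff 0).mpr ⟨0, by ring⟩
  have hltc0 : ltc (flat 0) y := by rw [flat_zero]; exact ⟨by omega, by omega⟩
  have hset : {g : ↥S → ℝ | IsRoot (extS S g) flat 0 y} =
      ⋂ u ∈ Finset.Ioo (-y.2) y.1,
        {g : ↥S → ℝ | lpt (extS S g) ((u, -u) + dd) y ≤
          lpt (extS S g) ((((0 : ℤ), (0 : ℤ)) : Pt) + dd) y} := by
    ext g
    simp only [Set.mem_setOf_eq, Set.mem_iInter, IsRoot, Finset.mem_Ioo]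
    constructor
    · rintro ⟨-, -, h3⟩ u hu
      have := h3 (2 * u) ((isCornerIdx_flat_iff _).mpr ⟨u, rfl⟩)
        (by rw [flat_even]; exact ⟨by omega, by omega⟩)
      rwa [flat_even, flat_zero] at this
    · intro h
      refine ⟨hcorner0, hltc0, ?_⟩
      intro z' hcz' hlz'
      obtain ⟨u, rfl⟩ := (isCornerIdx_flat_iff z').mp hcz'
      rw [flat_even] at hlz'
      rw [flat_even, flat_zero]
      exact h u ⟨by have := hlz'.2; omega, hlz'.1⟩
  rw [hset]
  refine Finset.measurableSet_biInter _ fun u hu => ?_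
  have hub := Finset.mem_Ioo.mp hu
  refine measurableSet_le (measurable_lpt_extS S ?_) (measurable_lpt_extS S ?_)
  · refine Prod.le_def.mpr ⟨?_, ?_⟩ <;> simp [dd] <;> omega
  · refine Prod.le_def.mpr ⟨?_, ?_⟩ <;> simp [dd] <;> omega

/-! ### Probabilistic lemmas -/

variable {Ω : Type*} [MeasurableSpace Ω] (P : Measure Ω) [IsProbabilityMeasure P]
  (W : Pt → Ω → ℝ)

lemma aemeasW (hW : IIDExp P W 1) (p : Pt) : AEMeasurable (W p) P := by
  by_contra h
  have h2 := hW.2 p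
  rw [Measure.map_of_not_aemeasurable h] at h2
  have : IsProbabilityMeasure (expMeasure 1) := isProbabilityMeasure_expMeasure one_pos
  have h3 : (expMeasure 1) Set.univ = 1 := measure_univ
  rw [← h2] at h3
  simp at h3

lemma aemeasurable_vec {ι : Type*} [Countable ι] (hW : IIDExp P W 1) (g : ι → Pt) :
    AEMeasurable (fun ω (i : ι) => W (g i) ω) P := by
  have h : ∀ i, AEMeasurable (W (g i)) P := fun i => aemeasW P W hW _
  refine ⟨fun ω i => (h i).mk _ ω, measurable_pi_lambda _ fun i => (h i).measurable_mk, ?_⟩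
  have hae : ∀ᵐ ω ∂P, ∀ i, W (g i) ω = (h i).mk _ ω := ae_all_iff.mpr fun i => (h i).ae_eq_mk
  filter_upwards [hae] with ω hω
  funext i
  exact hω i

lemma map_eq_pi {ι : Type*} [Fintype ι] (hW : IIDExp P W 1) (g : ι → Pt)
    (hg : Function.Injective g) :
    Measure.map (fun ω (i : ι) => W (g i) ω) P = Measure.pi (fun _ => expMeasure 1) := by
  classical
  haveI : IsProbabilityMeasure (expMeasure 1) := isProbabilityMeasure_expMeasure one_pos
  refine (Measure.pi_eq fun A hA => ?_).symm
  rw [Measure.map_apply_of_aemeasurable (aemeasurable_vec P W hW g) (MeasurableSet.univ_pi hA)]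
  set B : Pt → Set ℝ := fun p => if h : ∃ i, g i = p then A h.choose else Set.univ with hBdef
  have hBg : ∀ i, B (g i) = A i := by
    intro i
    have hex : ∃ j, g j = g i := ⟨i, rfl⟩
    simp only [hBdef, dif_pos hex]
    exact congrArg A (hg hex.choose_spec)
  have hBmeas : ∀ p, p ∈ Finset.image g Finset.univ → MeasurableSet (B p) := by
    intro p hp
    obtain ⟨i, -, rfl⟩ := Finset.mem_image.mp hp
    rw [hBg]
    exact hA i
  have hind := (iIndepFun_iff_measure_inter_preimage_eq_mul.mp hW.1)
    (Finset.image g Finset.univ) (sets := B) hBmeas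
  have hpre : (fun ω (i : ι) => W (g i) ω) ⁻¹' (Set.univ.pi A) =
      ⋂ p ∈ Finset.image g Finset.univ, W p ⁻¹' B p := by
    ext ω
    simp only [Set.mem_preimage, Set.mem_pi, Set.mem_univ, forall_true_left, Set.mem_iInter,
      Finset.mem_image, Finset.mem_univ, true_and]
    constructor
    · rintro h p ⟨i, rfl⟩
      rw [hBg i]
      exact h i
    · intro h i
      have hmem := h (g i) ⟨i, rfl⟩
      rw [hBg i] at hmem
      exact hmem
  rw [hpre, hind, Finset.prod_image (fun x _ y _ h => hg h)]
  refine Finset.prod_congr rfl fun i _ => ?_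
  rw [hBg i, ← hW.2 (g i),
    Measure.map_apply_of_aemeasurable (aemeasW P W hW (g i)) (hA i)]

lemma shift_prob (hW : IIDExp P W 1) (n : ℕ) (hn : 1 ≤ n) (z : ℤ)
    (hz0 : 0 ≤ z) (hz1 : z ≤ (n : ℤ) - 1) :
    P {ω | IsRoot (fun p => W p ω) flat (2 * z) ((n : ℤ), 1)} =
      P {ω | IsRoot (fun p => W p ω) flat 0 ((n : ℤ) - z, 1 + z)} := by
  classical
  set y : Pt := ((n : ℤ) - z, 1 + z) with hy
  have hy1 : 1 ≤ y.1 := by simp [hy]; omega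
  have hy2 : 1 ≤ y.2 := by simp [hy]; omega
  set S : Finset Pt := Finset.Icc ((1 - (n : ℤ), 1 - (n : ℤ)) : Pt) (((n : ℤ), (n : ℤ)) : Pt)
    with hS
  have hSin : ∀ p : Pt, 2 - y.2 ≤ p.1 → p.1 ≤ y.1 → 2 - y.1 ≤ p.2 → p.2 ≤ y.2 → p ∈ S := by
    intro p h1 h2 h3 h4
    simp only [hy] at h1 h2 h3 h4
    rw [hS, Finset.mem_Icc]
    constructor <;> refine Prod.le_def.mpr ⟨?_, ?_⟩ <;> simp <;> omega
  set G : Set (↥S → ℝ) := {g | IsRoot (extS S g) flat 0 y} with hG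
  have hGmeas : MeasurableSet G := measurableSet_isRootSet S y hy1 hy2
  have hcongr : ∀ f : Pt → ℝ, (IsRoot f flat 0 y ↔ IsRoot (extS S fun i : ↥S => f ↑i) flat 0 y) :=
    fun f => isRoot_zero_congr y fun p h1 h2 h3 h4 => by
      have hpS : p ∈ S := hSin p h1 h2 h3 h4
      simp [extS, hpS]
  have hxy : (((n : ℤ), (1 : ℤ)) : Pt) - (z, -z) = y := by
    rw [hy, Prod.mk_sub_mk]
    simp [sub_neg_eq_add]
  have hpre1 : {ω | IsRoot (fun p => W p ω) flat (2 * z) ((n : ℤ), 1)} =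
      (fun ω (i : ↥S) => W (↑i + (z, -z)) ω) ⁻¹' G := by
    ext ω
    simp only [Set.mem_setOf_eq, Set.mem_preimage]
    rw [isRoot_shift, hxy]
    exact hcongr (fun p => W (p + (z, -z)) ω)
  have hpre2 : {ω | IsRoot (fun p => W p ω) flat 0 ((n : ℤ) - z, 1 + z)} =
      (fun ω (i : ↥S) => W (↑i) ω) ⁻¹' G := by
    ext ω
    simp only [Set.mem_setOf_eq, Set.mem_preimage]
    exact hcongr (fun p => W p ω)
  have hinj1 : Function.Injective (fun i : ↥S => (↑i : Pt) + (z, -z)) :=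
    fun i j h => Subtype.coe_injective (add_right_cancel h)
  have hinj2 : Function.Injective (fun i : ↥S => (↑i : Pt)) := Subtype.coe_injective
  rw [hpre1, hpre2,
    ← Measure.map_apply_of_aemeasurable (aemeasurable_vec P W hW _) hGmeas,
    ← Measure.map_apply_of_aemeasurable (aemeasurable_vec P W hW _) hGmeas,
    map_eq_pi P W hW _ hinj1, map_eq_pi P W hW _ hinj2]

lemma key (hW : IIDExp P W 1) (n : ℕ) (hn : 1 ≤ n) :
    1 / (n : ℝ≥0∞) ≤ P {ω | HeightGe (fun p => W p ω) 0 n} := by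
  classical
  set I : Finset ℤ := Finset.Icc 0 ((n : ℤ) - 1) with hI
  have hIne : I.Nonempty := ⟨0, Finset.mem_Icc.mpr ⟨le_rfl, by omega⟩⟩
  set B : ℤ → Set Ω := fun z => {ω | IsRoot (fun p => W p ω) flat (2 * z) ((n : ℤ), 1)} with hB
  have hcover : (Set.univ : Set Ω) ⊆ ⋃ z ∈ I, B z := by
    intro ω _
    obtain ⟨z, hz, hroot⟩ := exists_root (fun p => W p ω) n hn
    exact Set.mem_biUnion hz hroot
  have hsum : (1 : ℝ≥0∞) ≤ ∑ z ∈ I, P (B z) :=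
    calc (1 : ℝ≥0∞) = P Set.univ := measure_univ.symm
    _ ≤ P (⋃ z ∈ I, B z) := measure_mono hcover
    _ ≤ ∑ z ∈ I, P (B z) := measure_biUnion_finset_le I B
  obtain ⟨z, hzI, hzmax⟩ := Finset.exists_max_image I (fun z => P (B z)) hIne
  have hcard : I.card = n := by rw [hI, Int.card_Icc]; omega
  have hle : (1 : ℝ≥0∞) ≤ (n : ℝ≥0∞) * P (B z) := by
    refine hsum.trans ?_
    calc ∑ z' ∈ I, P (B z') ≤ I.card • P (B z) :=
          Finset.sum_le_card_nsmul I _ _ fun z' hz' => hzmax z' hz'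
    _ = (n : ℝ≥0∞) * P (B z) := by rw [hcard, nsmul_eq_mul]
  have h1n : 1 / (n : ℝ≥0∞) ≤ P (B z) := by
    rw [ENNReal.div_le_iff_le_mul (Or.inl (by exact_mod_cast Nat.cast_ne_zero.mpr (by omega)))
      (Or.inl (ENNReal.natCast_ne_top n)), mul_comm]
    exact hle
  refine h1n.trans ?_
  have hzb := Finset.mem_Icc.mp hzI
  calc P (B z) = P {ω | IsRoot (fun p => W p ω) flat 0 ((n : ℤ) - z, 1 + z)} :=
        shift_prob P W hW n hn z hzb.1 hzb.2
  _ ≤ P {ω | HeightGe (fun p => W p ω) 0 n} := by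
      refine measure_mono fun ω h => ?_
      exact ⟨((n : ℤ) - z, 1 + z), show ((n : ℤ) - z) + (1 + z) = (n : ℤ) + 1 by ring,
        by simpa using h⟩

end GFAux

open scoped ENNReal

/-- For exponential LPP with the flat substrate whose concave corners form the antidiagonal,
`P(H₀ ≥ n) ≥ c/n` for some `c > 0`, and consequently `E[H₀] = ∑_{n ≥ 1} P(H₀ ≥ n) = ∞`. -/
theorem flat_substrate_height_infinite_mean
    {Ω : Type*} [MeasurableSpace Ω] (P : Measure Ω) [IsProbabilityMeasure P]
    (W : Pt → Ω → ℝ) (hW : IIDExp P W 1) :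
    (∃ c : ℝ, 0 < c ∧ ∀ n : ℕ, 1 ≤ n →
      ENNReal.ofReal (c / (n : ℝ)) ≤ P {ω | HeightGe (fun p => W p ω) 0 n}) ∧
    (∑' n : ℕ, P {ω | HeightGe (fun p => W p ω) 0 (n + 1)}) = ⊤ := by
  have hkey : ∀ n : ℕ, 1 ≤ n →
      ENNReal.ofReal ((1 : ℝ) / (n : ℝ)) ≤ P {ω | HeightGe (fun p => W p ω) 0 n} := by
    intro n hn
    have h := GFAux.key P W hW n hn
    have he : ENNReal.ofReal ((1 : ℝ) / (n : ℝ)) = 1 / (n : ℝ≥0∞) := by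
      rw [ENNReal.ofReal_div_of_pos (by exact_mod_cast Nat.pos_of_ne_zero (by omega)),
        ENNReal.ofReal_one, ENNReal.ofReal_natCast]
    rw [he]
    exact h
  constructor
  · exact ⟨1, one_pos, hkey⟩
  · have hdiv : (∑' n : ℕ, 1 / ((n : ℝ≥0∞) + 1)) = ⊤ := by
      by_contra h
      have hs := ENNReal.summable_toReal h
      have heq : (fun n : ℕ => ((1 : ℝ≥0∞) / ((n : ℝ≥0∞) + 1)).toReal) =
          fun n : ℕ => 1 / ((n : ℝ) + 1) := by
        funext n
        have h2 : ((n : ℝ≥0∞) + 1).toReal = (n : ℝ) + 1 := by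
          rw [ENNReal.toReal_add (ENNReal.natCast_ne_top n) ENNReal.one_ne_top]
          simp
        rw [ENNReal.toReal_div, h2]
        simp
      rw [heq] at hs
      have hsum : Summable (fun n : ℕ => 1 / (n : ℝ)) := by
        rw [← summable_nat_add_iff 1]
        exact hs.congr fun n => by simp
      exact Real.not_summable_one_div_natCast hsum
    rw [← top_le_iff]
    calc (⊤ : ℝ≥0∞) = ∑' n : ℕ, 1 / ((n : ℝ≥0∞) + 1) := hdiv.symm
    _ ≤ ∑' n : ℕ, P {ω | HeightGe (fun p => W p ω) 0 (n + 1)} := by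
        refine ENNReal.tsum_le_tsum fun n => ?_
        have h := GFAux.key P W hW (n + 1) (by omega)
        rw [show (((n + 1 : ℕ)) : ℝ≥0∞) = (n : ℝ≥0∞) + 1 by push_cast; ring] at h
        exact h
end
end
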